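/- Let Γ be a connected, locally finite graph equipped with a cobounded quasi-action of a group G, and suppose Γ has at least two ends. Then there exists a constant C ≥ 1 such that: for every finite vertex set Z ⊆ V(Γ) such that Γ with Z deleted is connected, every vertex z ∈ Z lies within distance C (in Γ) of some vertex of Z that has a neighbour outside Z. -/

import Mathlib

open SimpleGraph

namespace Paper

variable {V W : Type*}

/-- Locally finite graph: every vertex has finite degree. -/
def LocFin (G : SimpleGraph V) : Prop := ∀ v : V, (G.neighborSet v).Finite

/-- All vertex degrees are at most `d`. -/
def DegLe (G : SimpleGraph V) (d : ℕ) : Prop :=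
  ∀ v : V, (G.neighborSet v).Finite ∧ (G.neighborSet v).ncard ≤ d

/-- Bounded valence. -/
def BddVal (G : SimpleGraph V) : Prop := ∃ d : ℕ, DegLe G d

/-- `(l, e)`-quasi-isometric embedding between the vertex sets of two graphs. -/
def IsQIE (G : SimpleGraph V) (H : SimpleGraph W) (l e : ℝ) (f : V → W) : Prop :=
  ∀ x y : V,
    (G.dist x y : ℝ) / l - e ≤ (H.dist (f x) (f y) : ℝ) ∧
      (H.dist (f x) (f y) : ℝ) ≤ l * (G.dist x y : ℝ) + e

/-- Coarse surjectivity: every vertex of the target lies within distance `e` of the image. -/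
def CoarseSurj (H : SimpleGraph W) (e : ℝ) (f : V → W) : Prop :=
  ∀ w : W, ∃ x : V, (H.dist w (f x) : ℝ) ≤ e

/-- `(l, e)`-quasi-isometry. -/
def IsQI (G : SimpleGraph V) (H : SimpleGraph W) (l e : ℝ) (f : V → W) : Prop :=
  IsQIE G H l e f ∧ CoarseSurj H e f

/-- `g` is an `h`-quasi-inverse of `f`. -/
def IsQInv (G : SimpleGraph V) (h : ℝ) (f : V → W) (g : W → V) : Prop :=
  ∀ x : V, (G.dist (g (f x)) x : ℝ) ≤ h

/-- Reachability by a walk all of whose vertices avoid the set `S`. -/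
def ReachOut (G : SimpleGraph V) (S : Set V) (a b : V) : Prop :=
  ∃ w : G.Walk a b, ∀ v ∈ w.support, v ∉ S

/-- A one-way infinite simple ray. -/
def RayIn (G : SimpleGraph V) (r : ℕ → V) : Prop :=
  Function.Injective r ∧ ∀ n : ℕ, G.Adj (r n) (r (n + 1))

/-- End-equivalence of rays: for every finite vertex set they have tails in the same
connected component of the graph with that set deleted. -/
def EndEquiv (G : SimpleGraph V) (r₁ r₂ : ℕ → V) : Prop :=
  ∀ S : Set V, S.Finite → ∃ N : ℕ, ∀ m n : ℕ, N ≤ m → N ≤ n → ReachOut G S (r₁ m) (r₂ n)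

/-- Two points (encoded as sequences: a constant sequence for a vertex, a ray for an end)
lie in distinct connected components of `G` with the vertex set `S` deleted. -/
def SepComps (G : SimpleGraph V) (S : Set V) (a b : ℕ → V) : Prop :=
  ∃ N : ℕ,
    (∀ m n : ℕ, N ≤ m → N ≤ n → ReachOut G S (a m) (a n)) ∧
    (∀ m n : ℕ, N ≤ m → N ≤ n → ReachOut G S (b m) (b n)) ∧
    (∀ m n : ℕ, N ≤ m → N ≤ n → ¬ ReachOut G S (a m) (b n))

/-- `vs(G) ≥ N`: any vertex set separating two ends has at least `N` elements. -/
def VsGe (G : SimpleGraph V) (N : ℕ) : Prop :=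
  ∀ r₁ r₂ : ℕ → V, RayIn G r₁ → RayIn G r₂ →
    ∀ S : Set V, S.Finite → SepComps G S r₁ r₂ → N ≤ S.ncard

/-- `vs(G) ≥ c` for a real threshold `c`. -/
def VsGeR (G : SimpleGraph V) (c : ℝ) : Prop :=
  ∀ r₁ r₂ : ℕ → V, RayIn G r₁ → RayIn G r₂ →
    ∀ S : Set V, S.Finite → SepComps G S r₁ r₂ → c ≤ (S.ncard : ℝ)

/-- `U` is a connected component of `G` with the vertex set `A` deleted. -/
def IsCompOut (G : SimpleGraph V) (A U : Set V) : Prop :=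
  ∃ a ∈ U, ∀ b : V, ReachOut G A a b ↔ b ∈ U

/-- The edge coboundary `δb` of a vertex set `b`. -/
def cob (G : SimpleGraph V) (b : Set V) : Set (Sym2 V) :=
  {e | ∃ x y : V, e = s(x, y) ∧ G.Adj x y ∧ x ∈ b ∧ y ∉ b}

/-- Membership in the Boolean ring `𝓑G` of vertex sets with finite coboundary. -/
def MemBX (G : SimpleGraph V) (b : Set V) : Prop := (cob G b).Finite

/-- The set of endpoints of the edges of `δb`. -/
def cobVerts (G : SimpleGraph V) (b : Set V) : Set V :=
  {v | ∃ w : V, s(v, w) ∈ cob G b}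

/-- A tight element: both sides induce connected subgraphs. -/
def Tight (G : SimpleGraph V) (b : Set V) : Prop :=
  (G.induce b).Connected ∧ (G.induce bᶜ).Connected

/-- Vertices of `A` that are endpoints of an edge with the other endpoint in `U`. -/
def AttachSet (G : SimpleGraph V) (A U : Set V) : Set V :=
  {v | v ∈ A ∧ ∃ u ∈ U, G.Adj v u}

/-- `incut(A) ≤ k` for a vertex set `A`, with the intrinsic metric of `G.induce A`. -/
def IncutBddSet (G : SimpleGraph V) (A : Set V) (k : ℕ) : Prop :=
  ∀ U : Set V, IsCompOut G A U →
    ∀ v w : A, (v : V) ∈ AttachSet G A U → (w : V) ∈ AttachSet G A U →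
      (G.induce A).dist v w ≤ k

/-- `outcut(A) ≤ k` for a vertex set `A`. -/
def OutcutBddSet (G : SimpleGraph V) (A : Set V) (k : ℕ) : Prop :=
  ∀ U : Set V, IsCompOut G A U → IncutBddSet G U k

/-- Uniform coboundary for a vertex set. -/
def UnifCobSet (G : SimpleGraph V) (A : Set V) : Prop :=
  (∃ k : ℕ, IncutBddSet G A k) ∧ (∃ k : ℕ, OutcutBddSet G A k)

/-- `incut(L) ≤ k` for a subgraph `L`, with its own intrinsic metric. -/
def IncutBddSub (G : SimpleGraph V) (L : G.Subgraph) (k : ℕ) : Prop :=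
  ∀ U : Set V, IsCompOut G L.verts U →
    ∀ v w : L.verts, (v : V) ∈ AttachSet G L.verts U → (w : V) ∈ AttachSet G L.verts U →
      L.coe.dist v w ≤ k

/-- `outcut(L) ≤ k` for a subgraph `L`. -/
def OutcutBddSub (G : SimpleGraph V) (L : G.Subgraph) (k : ℕ) : Prop :=
  ∀ U : Set V, IsCompOut G L.verts U → IncutBddSet G U k

/-- Uniform coboundary for a subgraph. -/
def UnifCobSub (G : SimpleGraph V) (L : G.Subgraph) : Prop :=
  (∃ k : ℕ, IncutBddSub G L k) ∧ (∃ k : ℕ, OutcutBddSub G L k)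

/-- Quasi-transitive graph: the automorphism group has finitely many orbits of vertices. -/
def QuasiTransitive (G : SimpleGraph V) : Prop :=
  ∃ F : Set V, F.Finite ∧ ∀ v : V, ∃ e : G ≃g G, ∃ w ∈ F, e w = v

/-- Hausdorff distance between two vertex sets is at most `r`. -/
def HausBdd (G : SimpleGraph V) (A B : Set V) (r : ℝ) : Prop :=
  (∀ a ∈ A, ∃ b ∈ B, (G.dist a b : ℝ) ≤ r) ∧ (∀ b ∈ B, ∃ a ∈ A, (G.dist a b : ℝ) ≤ r)

/-- Reachability by a walk avoiding the edge set `F`. -/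
def ReachAvoidE (G : SimpleGraph V) (F : Set (Sym2 V)) (a b : V) : Prop :=
  ∃ w : G.Walk a b, ∀ e ∈ w.edges, e ∉ F

/-- The ends of the rays `r₁`, `r₂` are separated by deleting the edge set `F`. -/
def SepEnds (G : SimpleGraph V) (F : Set (Sym2 V)) (r₁ r₂ : ℕ → V) : Prop :=
  ∃ N : ℕ, ∀ m n : ℕ, N ≤ m → N ≤ n → ¬ ReachAvoidE G F (r₁ m) (r₂ n)

/-- Accessibility: some `k ≥ 1` such that any two distinct ends can be separated by
deleting at most `k` edges. -/
def Accessible (G : SimpleGraph V) : Prop :=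
  ∃ k : ℕ, 1 ≤ k ∧ ∀ r₁ r₂ : ℕ → V, RayIn G r₁ → RayIn G r₂ → ¬ EndEquiv G r₁ r₂ →
    ∃ F : Set (Sym2 V), F.Finite ∧ F.ncard ≤ k ∧ SepEnds G F r₁ r₂

/-- `l`-quasi-action of a group on the vertex set of a graph. -/
def IsQAct {G₀ : Type*} [Group G₀] (G : SimpleGraph V) (l : ℝ) (φ : G₀ → V → V) : Prop :=
  (∀ g : G₀, IsQI G G l l (φ g)) ∧
  (∀ (g h : G₀) (x : V), (G.dist (φ (g * h) x) (φ g (φ h x)) : ℝ) ≤ l) ∧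
  (∀ g : G₀, IsQInv G l (φ g) (φ g⁻¹) ∧ IsQInv G l (φ g⁻¹) (φ g))

/-- `B`-cobounded quasi-action. -/
def Cobdd {G₀ : Type*} [Group G₀] (G : SimpleGraph V) (B : ℝ) (φ : G₀ → V → V) : Prop :=
  ∀ x y : V, ∃ g : G₀, (G.dist x (φ g y) : ℝ) ≤ B

/-- The diameter (in `ℕ`) of a vertex set. -/
noncomputable def setDiam (G : SimpleGraph V) (S : Set V) : ℕ :=
  sSup {d : ℕ | ∃ x ∈ S, ∃ y ∈ S, G.dist x y = d}

/-- 2-connected: connected, at least three vertices, and deleting any single vertex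
leaves it connected. -/
def TwoConnected (G : SimpleGraph V) : Prop :=
  G.Connected ∧ (∃ a b c : V, a ≠ b ∧ a ≠ c ∧ b ≠ c) ∧
    ∀ v : V, (G.induce {w : V | w ≠ v}).Connected

/-- Tree decomposition. -/
def IsTreeDecomp {VT : Type*} (X : SimpleGraph V) (T : SimpleGraph VT) (B : VT → Set V) :
    Prop :=
  T.IsTree ∧ (∀ x : V, ∃ u : VT, x ∈ B u) ∧
    ∀ u v w : VT, (∃ p : T.Walk u w, p.IsPath ∧ v ∈ p.support) → B u ∩ B w ⊆ B v

/-- Bounded adhesion. -/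
def BddAdhesion {VT : Type*} (T : SimpleGraph VT) (B : VT → Set V) : Prop :=
  ∃ N : ℕ, ∀ u w : VT, T.Adj u w → (B u ∩ B w).Finite ∧ (B u ∩ B w).ncard ≤ N

/-- Connected parts. -/
def ConnParts {VT : Type*} (X : SimpleGraph V) (B : VT → Set V) : Prop :=
  ∀ u : VT, (X.induce (B u)).Connected

/-- Replacing each bag by its closed `r`-neighbourhood. -/
def ballBag {VT : Type*} (X : SimpleGraph V) (B : VT → Set V) (r : ℕ) : VT → Set V :=
  fun u => {x : V | ∃ y ∈ B u, X.dist x y ≤ r}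

/-- A point of `G` which is either a vertex lying outside `B(S;R)` (encoded as a constant
sequence) or an end (encoded as a ray representing it). -/
def PtSeq (G : SimpleGraph V) (S : Set V) (R : ℝ) (a : ℕ → V) : Prop :=
  (∃ v : V, a = Function.const ℕ v ∧ ∀ s ∈ S, R < (G.dist v s : ℝ)) ∨ RayIn G a

/-- A subring of `𝓑G`: contains `∅`, and is closed under intersection and
symmetric difference. -/
def IsSubring (G : SimpleGraph V) (R : Set (Set V)) : Prop :=
  (∀ b ∈ R, MemBX G b) ∧ ∅ ∈ R ∧
    (∀ a ∈ R, ∀ b ∈ R, a ∩ b ∈ R) ∧ (∀ a ∈ R, ∀ b ∈ R, symmDiff a b ∈ R)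

/-- The subring generated by a family. -/
def genSubring (G : SimpleGraph V) (E : Set (Set V)) : Set (Set V) :=
  ⋂₀ {R : Set (Set V) | IsSubring G R ∧ E ⊆ R}

/-- Two vertex sets are nested. -/
def Nested (a b : Set V) : Prop :=
  a ∩ b = ∅ ∨ a ∩ bᶜ = ∅ ∨ aᶜ ∩ b = ∅ ∨ aᶜ ∩ bᶜ = ∅

/-- A nested family: closed under complementation and pairwise nested. -/
def NestedFam (E : Set (Set V)) : Prop :=
  (∀ b ∈ E, bᶜ ∈ E) ∧ ∀ a ∈ E, ∀ b ∈ E, Nested a b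

/-- A `G₀`-invariant family of vertex sets. -/
def GInvFam (G₀ : Type*) [Group G₀] [MulAction G₀ V] (E : Set (Set V)) : Prop :=
  ∀ g : G₀, ∀ b ∈ E, (fun x => g • x) '' b ∈ E

/-- A `G₀`-finite family of vertex sets: it meets only finitely many orbits. -/
def GFinFam (G₀ : Type*) [Group G₀] [MulAction G₀ V] (E : Set (Set V)) : Prop :=
  ∃ F : Set (Set V), F.Finite ∧ F ⊆ E ∧
    ∀ b ∈ E, ∃ g : G₀, ∃ c ∈ F, (fun x => g • x) '' c = b

/-- `g` stabilises the subgraph `L` setwise. -/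
def StabSub {G₀ : Type*} [Group G₀] [MulAction G₀ V] (G : SimpleGraph V) (g : G₀)
    (L : G.Subgraph) : Prop :=
  (∀ v : V, v ∈ L.verts ↔ g • v ∈ L.verts) ∧
    (∀ a b : V, L.Adj a b ↔ L.Adj (g • a) (g • b))

end Paper

namespace StmtAux
variable {V : Type*}

lemma reachOut_symm {Γ : SimpleGraph V} {S : Set V} {a b : V}
    (h : ∃ w : Γ.Walk a b, ∀ v ∈ w.support, v ∉ S) :
    ∃ w : Γ.Walk b a, ∀ v ∈ w.support, v ∉ S := by
  obtain ⟨w, hw⟩ := h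
  exact ⟨w.reverse, fun v hv => hw v (by simpa [SimpleGraph.Walk.support_reverse] using hv)⟩

lemma reachOut_trans {Γ : SimpleGraph V} {S : Set V} {a b c : V}
    (h1 : ∃ w : Γ.Walk a b, ∀ v ∈ w.support, v ∉ S)
    (h2 : ∃ w : Γ.Walk b c, ∀ v ∈ w.support, v ∉ S) :
    ∃ w : Γ.Walk a c, ∀ v ∈ w.support, v ∉ S := by
  obtain ⟨w1, hw1⟩ := h1; obtain ⟨w2, hw2⟩ := h2
  refine ⟨w1.append w2, fun v hv => ?_⟩
  rcases (SimpleGraph.Walk.mem_support_append_iff _ _).1 hv with h | h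
  exacts [hw1 v h, hw2 v h]

lemma geo_avoid {Γ : SimpleGraph V} (hc : Γ.Connected) (S : Set V) (a b : V)
    (c : ℝ) (hab : (Γ.dist a b : ℝ) ≤ c) (hfar : ∀ s ∈ S, c < (Γ.dist a s : ℝ)) :
    ∃ q : Γ.Walk a b, ∀ u ∈ q.support, u ∉ S := by
  classical
  obtain ⟨p, hp⟩ := hc.exists_walk_length_eq_dist a b
  refine ⟨p, fun u hu hus => ?_⟩
  have h1 : Γ.dist a u ≤ Γ.dist a b :=
    le_trans (le_trans (SimpleGraph.dist_le (p.takeUntil u hu))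
      (SimpleGraph.Walk.length_takeUntil_le p hu)) (le_of_eq hp)
  have h2 : (Γ.dist a u : ℝ) ≤ c := le_trans (by exact_mod_cast h1) hab
  exact absurd h2 (not_le.2 (hfar u hus))

lemma ball_finite {Γ : SimpleGraph V} (hc : Γ.Connected)
    (hlf : ∀ v : V, (Γ.neighborSet v).Finite) (x : V) :
    ∀ n : ℕ, {v : V | Γ.dist x v ≤ n}.Finite := by
  intro n
  induction n with
  | zero =>
    refine Set.Finite.subset (Set.finite_singleton x) ?_
    intro v hv
    simp only [Set.mem_setOf_eq, Nat.le_zero] at hv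
    exact Set.mem_singleton_iff.2 ((hc.dist_eq_zero_iff).1 hv).symm
  | succ n ih =>
    refine Set.Finite.subset (ih.union (Set.Finite.biUnion ih (fun u _ => hlf u))) ?_
    intro v hv
    simp only [Set.mem_setOf_eq] at hv
    by_cases hle : Γ.dist x v ≤ n
    · exact Or.inl hle
    · have hne : Γ.dist v x ≠ 0 := by rw [SimpleGraph.dist_comm]; omega
      obtain ⟨p, hp⟩ := SimpleGraph.exists_walk_of_dist_ne_zero hne
      cases p with
      | nil => simp at hle
      | @cons _ y _ hadj q =>
        refine Or.inr (Set.mem_biUnion (show Γ.dist x y ≤ n from ?_) hadj.symm)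
        have hlen : q.length + 1 = Γ.dist x v := by
          simpa [SimpleGraph.dist_comm] using hp
        have : Γ.dist x y ≤ q.length := by
          rw [SimpleGraph.dist_comm]
          simpa using SimpleGraph.dist_le q
        omega

lemma escape_fin {r : ℕ → V} (hr : Function.Injective r) {F : Set V}
    (hF : F.Finite) : ∃ K : ℕ, ∀ m, K ≤ m → r m ∉ F := by
  have hfin : {m : ℕ | r m ∈ F}.Finite := hF.preimage hr.injOn
  obtain ⟨K, hK⟩ := hfin.bddAbove
  exact ⟨K + 1, fun m hm hmem => by have := hK hmem; omega⟩

lemma escape_dist {Γ : SimpleGraph V} (hc : Γ.Connected)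
    (hlf : ∀ v : V, (Γ.neighborSet v).Finite)
    {r : ℕ → V} (hr : Function.Injective r) (x : V) (c : ℝ) :
    ∃ K : ℕ, ∀ m, K ≤ m → c < (Γ.dist x (r m) : ℝ) := by
  obtain ⟨n, hn⟩ := exists_nat_gt c
  obtain ⟨K, hK⟩ := escape_fin hr (ball_finite hc hlf x n)
  refine ⟨K, fun m hm => ?_⟩
  have h1 : ¬ Γ.dist x (r m) ≤ n := hK m hm
  have h2 : (n : ℝ) < Γ.dist x (r m) := by exact_mod_cast Nat.lt_of_not_le (by simpa using h1)
  linarith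

lemma ray_seg_aux {Γ : SimpleGraph V} {r : ℕ → V}
    (hadj : ∀ n, Γ.Adj (r n) (r (n + 1))) (m : ℕ) :
    ∀ k : ℕ, ∃ w : Γ.Walk (r m) (r (m + k)), ∀ v ∈ w.support, ∃ j, m ≤ j ∧ v = r j := by
  intro k
  induction k with
  | zero => exact ⟨SimpleGraph.Walk.nil, fun v hv => ⟨m, le_refl m, by simpa using hv⟩⟩
  | succ k ih =>
    obtain ⟨w, hw⟩ := ih
    refine ⟨w.append (SimpleGraph.Walk.cons (hadj (m + k)) SimpleGraph.Walk.nil),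
      fun v hv => ?_⟩
    rcases (SimpleGraph.Walk.mem_support_append_iff _ _).1 hv with h | h
    · exact hw v h
    · simp only [SimpleGraph.Walk.support_cons, SimpleGraph.Walk.support_nil,
        List.mem_cons, List.mem_singleton] at h
      rcases h with h | h | h
      · exact ⟨m + k, by omega, h⟩
      · exact ⟨m + k + 1, by omega, h⟩
      · exact absurd h (by simp)

lemma ray_seg {Γ : SimpleGraph V} {r : ℕ → V}
    (hadj : ∀ n, Γ.Adj (r n) (r (n + 1))) (m m' : ℕ) (h : m ≤ m') :
    ∃ w : Γ.Walk (r m) (r m'), ∀ v ∈ w.support, ∃ j, m ≤ j ∧ v = r j := by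
  obtain ⟨k, rfl⟩ : ∃ k, m' = m + k := ⟨m' - m, by omega⟩
  exact ray_seg_aux hadj m k

lemma cross_lemma {Γ : SimpleGraph V} (Z : Set V) :
    ∀ {x y : V} (p : Γ.Walk x y), x ∈ Z → y ∉ Z →
      ∃ a ∈ p.support, a ∈ Z ∧ ∃ b, Γ.Adj a b ∧ b ∉ Z := by
  intro x y p
  induction p with
  | nil => intro hx hy; exact absurd hx hy
  | @cons u v w hadj q ih =>
    intro hx hy
    by_cases hv : v ∈ Z
    · obtain ⟨a, ha, haZ, b, hb⟩ := ih hv hy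
      exact ⟨a, by simp only [SimpleGraph.Walk.support_cons, List.mem_cons]; exact Or.inr ha,
        haZ, b, hb⟩
    · exact ⟨u, by simp, hx, v, hadj, hv⟩

lemma pullback_walk {Γ : SimpleGraph V} (hc : Γ.Connected) (S : Set V)
    (h : V → V) (c : ℝ) (hc0 : 0 ≤ c) (Good : V → Prop)
    (hstep : ∀ v v', Γ.Adj v v' → Good v → Good v' → (Γ.dist (h v) (h v') : ℝ) ≤ c)
    (hfar : ∀ v, Good v → ∀ s ∈ S, c < (Γ.dist (h v) s : ℝ)) :
    ∀ {a b : V} (p : Γ.Walk a b), (∀ v ∈ p.support, Good v) →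
      ∃ q : Γ.Walk (h a) (h b), ∀ u ∈ q.support, u ∉ S := by
  intro a b p
  induction p with
  | @nil x =>
    intro hg
    refine ⟨SimpleGraph.Walk.nil, fun u hu hus => ?_⟩
    have hu' : u = h x := by simpa using hu
    rw [hu'] at hus
    have h2 := hfar x (hg x (by simp)) _ hus
    rw [SimpleGraph.dist_self] at h2
    norm_num at h2
    linarith
  | @cons u v w hadj q ih =>
    intro hg
    have hgu : Good u := hg u (by simp)
    have hgv : Good v := hg v (by simp)
    obtain ⟨q1, hq1⟩ := geo_avoid hc S (h u) (h v) c (hstep u v hadj hgu hgv)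
      (hfar u hgu)
    obtain ⟨q2, hq2⟩ := ih (fun x hx => hg x (by
      simp only [SimpleGraph.Walk.support_cons, List.mem_cons]; exact Or.inr hx))
    refine ⟨q1.append q2, fun x hx => ?_⟩
    rcases (SimpleGraph.Walk.mem_support_append_iff _ _).1 hx with h | h
    exacts [hq1 x h, hq2 x h]

end StmtAux

open StmtAux in
open Paper in
theorem stmt3 {V G₀ : Type*} [Group G₀] (Γ : SimpleGraph V)
    (hc : Γ.Connected) (hlf : LocFin Γ)
    (l B : ℝ) (hl : 1 ≤ l) (hB : 0 ≤ B)
    (φ : G₀ → V → V) (hqa : IsQAct Γ l φ) (hcb : Cobdd Γ B φ)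
    (hends : ∃ r₁ r₂ : ℕ → V, RayIn Γ r₁ ∧ RayIn Γ r₂ ∧ ¬ EndEquiv Γ r₁ r₂) :
    ∃ C : ℝ, 1 ≤ C ∧
      ∀ Z : Set V, Z.Finite →
        (∀ a b : V, a ∉ Z → b ∉ Z → ReachOut Γ Z a b) →
        ∀ z ∈ Z, ∃ w ∈ Z, (∃ u : V, u ∉ Z ∧ Γ.Adj w u) ∧ (Γ.dist z w : ℝ) ≤ C := by
  classical
  obtain ⟨r₁, r₂, hr₁, hr₂, hne⟩ := hends
  rw [EndEquiv] at hne
  push_neg at hne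
  obtain ⟨S₀, hS₀fin, hsep0⟩ := hne
  have hl0 : (0:ℝ) < l := lt_of_lt_of_le one_pos hl
  -- S₀ is nonempty
  rcases Set.eq_empty_or_nonempty S₀ with hemp | ⟨x₀, hx₀⟩
  · exfalso
    obtain ⟨m, n, _, _, hro⟩ := hsep0 0
    exact hro ⟨(hc (r₁ m) (r₂ n)).some, fun v _ => by simp [hemp]⟩
  -- indices past which the rays avoid S₀
  obtain ⟨K₁, hK₁⟩ := escape_fin hr₁.1 hS₀fin
  obtain ⟨K₂, hK₂⟩ := escape_fin hr₂.1 hS₀fin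
  -- diameter-type bound for S₀
  obtain ⟨D0, hD0⟩ := (hS₀fin.image (fun s => (Γ.dist x₀ s : ℝ))).bddAbove
  have hD : ∀ s ∈ S₀, (Γ.dist x₀ s : ℝ) ≤ max D0 0 :=
    fun s hs => le_trans (hD0 (Set.mem_image_of_mem _ hs)) (le_max_left _ _)
  set D := max D0 0 with hDdef
  have hDnn : (0:ℝ) ≤ D := le_max_right _ _
  set K := max K₁ K₂ with hKdef
  have hK₁K : K₁ ≤ K := le_max_left _ _
  have hK₂K : K₂ ≤ K := le_max_right _ _
  -- upgraded separation property
  have hsep : ∀ m n, K ≤ m → K ≤ n → ¬ ReachOut Γ S₀ (r₁ m) (r₂ n) := by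
    intro m n hm hn hro
    obtain ⟨m₀, n₀, hm₀, hn₀, hro₀⟩ := hsep0 (max m n)
    have h1 : ReachOut Γ S₀ (r₁ m) (r₁ m₀) := by
      obtain ⟨w, hw⟩ := ray_seg hr₁.2 m m₀ (le_trans (le_max_left _ _) hm₀)
      refine ⟨w, fun v hv => ?_⟩
      obtain ⟨j, hj, rfl⟩ := hw v hv
      exact hK₁ j (le_trans hK₁K (le_trans hm hj))
    have h2 : ReachOut Γ S₀ (r₂ n) (r₂ n₀) := by
      obtain ⟨w, hw⟩ := ray_seg hr₂.2 n n₀ (le_trans (le_max_right _ _) hn₀)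
      refine ⟨w, fun v hv => ?_⟩
      obtain ⟨j, hj, rfl⟩ := hw v hv
      exact hK₂ j (le_trans hK₂K (le_trans hn hj))
    exact hro₀ (reachOut_trans (reachOut_trans (reachOut_symm h1) hro) h2)
  -- triangle inequality, cast to ℝ
  have htri : ∀ a b c' : V, (Γ.dist a c' : ℝ) ≤ Γ.dist a b + Γ.dist b c' := by
    intro a b c'; exact_mod_cast hc.dist_triangle
  have hcomm : ∀ a b : V, (Γ.dist a b : ℝ) = Γ.dist b a := by
    intro a b; rw [SimpleGraph.dist_comm]
  -- the constant
  refine ⟨B + l * (D + 4 * l) + 1, by nlinarith [mul_nonneg hl0.le (by linarith : (0:ℝ) ≤ D + 4 * l)], ?_⟩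
  intro Z hZfin hZconn z hz
  by_contra hcon
  push_neg at hcon
  -- every vertex within distance C of z lies in Z
  have hball : ∀ v : V, (Γ.dist z v : ℝ) ≤ B + l * (D + 4 * l) + 1 → v ∈ Z := by
    intro v hv
    by_contra hvZ
    obtain ⟨p, hp⟩ := hc.exists_walk_length_eq_dist z v
    obtain ⟨a, ha, haZ, b, hab, hbZ⟩ := cross_lemma Z p hz hvZ
    have h1 : Γ.dist z a ≤ Γ.dist z v :=
      le_trans (le_trans (SimpleGraph.dist_le (p.takeUntil a ha))
        (SimpleGraph.Walk.length_takeUntil_le p ha)) (le_of_eq hp)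
    have h2 : (Γ.dist z a : ℝ) ≤ B + l * (D + 4 * l) + 1 :=
      le_trans (by exact_mod_cast h1) hv
    exact absurd h2 (not_le.2 (hcon a haZ ⟨b, hbZ, hab⟩))
  have hGoodlt : ∀ v : V, v ∉ Z → B + l * (D + 4 * l) + 1 < (Γ.dist z v : ℝ) :=
    fun v hv => lt_of_not_ge (fun hle => hv (hball v hle))
  -- choose the group element
  obtain ⟨g, hg⟩ := hcb z x₀
  have hinv1 : ∀ x, (Γ.dist (φ g⁻¹ (φ g x)) x : ℝ) ≤ l := (hqa.2.2 g).1
  -- far pullback estimate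
  have hfar : ∀ v : V, v ∉ Z → ∀ s ∈ S₀, 2 * l < (Γ.dist (φ g⁻¹ v) s : ℝ) := by
    intro v hv s hs
    have h1 := hGoodlt v hv
    have h2 := htri z (φ g x₀) v
    have h3 : l * (D + 4 * l) + 1 < (Γ.dist (φ g x₀) v : ℝ) := by
      have := hcomm z (φ g x₀); linarith [hg]
    have h4 := ((hqa.1 g⁻¹).1 (φ g x₀) v).1
    have h5 : D + 4 * l < (Γ.dist (φ g x₀) v : ℝ) / l := by
      rw [lt_div_iff₀ hl0]
      nlinarith
    have h6 : D + 3 * l < (Γ.dist (φ g⁻¹ (φ g x₀)) (φ g⁻¹ v) : ℝ) := by linarith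
    have h7 := htri (φ g⁻¹ (φ g x₀)) x₀ (φ g⁻¹ v)
    have h8 : (Γ.dist (φ g⁻¹ (φ g x₀)) x₀ : ℝ) ≤ l := hinv1 x₀
    have h9 : D + 2 * l < (Γ.dist x₀ (φ g⁻¹ v) : ℝ) := by linarith
    have h10 := htri x₀ s (φ g⁻¹ v)
    have h11 := hD s hs
    have h12 := hcomm s (φ g⁻¹ v)
    linarith
  -- step estimate
  have hstep : ∀ v v' : V, Γ.Adj v v' → (Γ.dist (φ g⁻¹ v) (φ g⁻¹ v') : ℝ) ≤ 2 * l := by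
    intro v v' hadj
    have hd1 : (Γ.dist v v' : ℝ) = 1 := by
      exact_mod_cast SimpleGraph.dist_eq_one_iff_adj.2 hadj
    have h4 := ((hqa.1 g⁻¹).1 v v').2
    rw [hd1] at h4
    linarith
  -- bound on distances inside Z
  obtain ⟨E0, hE0⟩ := (hZfin.image (fun w => (Γ.dist z w : ℝ))).bddAbove
  have hE : ∀ w ∈ Z, (Γ.dist z w : ℝ) ≤ max E0 0 :=
    fun w hw => le_trans (hE0 (Set.mem_image_of_mem _ hw)) (le_max_left _ _)
  set EZ := max E0 0 with hEZdef
  -- choose far points on the rays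
  obtain ⟨K₁', hK₁'⟩ := escape_dist hc hlf hr₁.1 x₀ (max (D + l) (l * (EZ + l + B)))
  obtain ⟨K₂', hK₂'⟩ := escape_dist hc hlf hr₂.1 x₀ (max (D + l) (l * (EZ + l + B)))
  set M := max K K₁' with hMdef
  set N := max K K₂' with hNdef
  have hM1 : (max (D + l) (l * (EZ + l + B)) : ℝ) < Γ.dist x₀ (r₁ M) :=
    hK₁' M (le_max_right _ _)
  have hN1 : (max (D + l) (l * (EZ + l + B)) : ℝ) < Γ.dist x₀ (r₂ N) :=
    hK₂' N (le_max_right _ _)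
  -- the translated far points lie outside Z
  have hout : ∀ y : V, (max (D + l) (l * (EZ + l + B)) : ℝ) < Γ.dist x₀ y → φ g y ∉ Z := by
    intro y hy hmem
    have h1 : (Γ.dist z (φ g y) : ℝ) ≤ EZ := hE _ hmem
    have h2 := ((hqa.1 g).1 x₀ y).1
    have h3 : EZ + l + B < (Γ.dist x₀ y : ℝ) / l := by
      rw [lt_div_iff₀ hl0]
      have := le_max_right (D + l) (l * (EZ + l + B))
      nlinarith [hy, this]
    have h4 := htri (φ g x₀) z (φ g y)
    have h5 := hcomm (φ g x₀) z
    linarith [hg]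
  have hαZ : φ g (r₁ M) ∉ Z := hout _ hM1
  have hβZ : φ g (r₂ N) ∉ Z := hout _ hN1
  -- the walk outside Z, pulled back
  obtain ⟨p, hp⟩ := hZconn _ _ hαZ hβZ
  obtain ⟨q, hq⟩ := pullback_walk hc S₀ (φ g⁻¹) (2 * l) (by linarith) (fun v => v ∉ Z)
    (fun v v' ha _ _ => hstep v v' ha) hfar p hp
  -- connect the endpoints back to the rays
  have hfar₁ : ∀ s ∈ S₀, (l : ℝ) < Γ.dist (r₁ M) s := by
    intro s hs
    have h1 := htri x₀ s (r₁ M)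
    have h2 := hD s hs
    have h3 := hcomm s (r₁ M)
    have h4 : (D + l : ℝ) < Γ.dist x₀ (r₁ M) :=
      lt_of_le_of_lt (le_max_left _ _) hM1
    linarith
  have hfar₂ : ∀ s ∈ S₀, (l : ℝ) < Γ.dist (r₂ N) s := by
    intro s hs
    have h1 := htri x₀ s (r₂ N)
    have h2 := hD s hs
    have h3 := hcomm s (r₂ N)
    have h4 : (D + l : ℝ) < Γ.dist x₀ (r₂ N) :=
      lt_of_le_of_lt (le_max_left _ _) hN1
    linarith
  have he₁ : ∃ w : Γ.Walk (r₁ M) (φ g⁻¹ (φ g (r₁ M))), ∀ v ∈ w.support, v ∉ S₀ := by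
    refine geo_avoid hc S₀ _ _ l ?_ hfar₁
    have h := hinv1 (r₁ M)
    rwa [SimpleGraph.dist_comm] at h
  have he₂ : ∃ w : Γ.Walk (r₂ N) (φ g⁻¹ (φ g (r₂ N))), ∀ v ∈ w.support, v ∉ S₀ := by
    refine geo_avoid hc S₀ _ _ l ?_ hfar₂
    have h := hinv1 (r₂ N)
    rwa [SimpleGraph.dist_comm] at h
  exact hsep M N (le_max_left _ _) (le_max_left _ _)
    (reachOut_trans he₁ (reachOut_trans ⟨q, hq⟩ (reachOut_symm he₂)))
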